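/- Let s = i·√7 ∈ ℂ (so s² = -7) and let q(x,y,z) = (x⁴ + y⁴ + z⁴) - (3/2)·(1 - s)·(x²y² + x²z² + y²z²), a quartic form over ℂ. If (a,b,c) ∈ ℂ³ is a point at which all three partial derivatives ∂q/∂x, ∂q/∂y, ∂q/∂z vanish, then a = b = c = 0. In other words, the plane quartic curve q = 0 in ℙ² over ℂ is smooth. -/

import Mathlib

open Complex

/-- `s = i√7`, a square root of `-7` in `ℂ`. -/
noncomputable def s : ℂ := Complex.I * (Real.sqrt 7 : ℝ)

/-- The quartic form `q(x,y,z) = x⁴+y⁴+z⁴ - (3/2)(1-s)(x²y²+x²z²+y²z²)`. -/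
noncomputable def q (x y z : ℂ) : ℂ :=
  (x ^ 4 + y ^ 4 + z ^ 4)
    - (3 / 2 : ℂ) * (1 - s) * (x ^ 2 * y ^ 2 + x ^ 2 * z ^ 2 + y ^ 2 * z ^ 2)

lemma s_sq : s ^ 2 = -7 := by
  have h7 : (Real.sqrt 7 : ℝ) ^ 2 = 7 := Real.sq_sqrt (by norm_num)
  simp only [s, mul_pow, Complex.I_sq]
  rw [← Complex.ofReal_pow, h7]
  norm_num

lemma hasDerivAt_q (b c x : ℂ) :
    HasDerivAt (fun x => q x b c)
      (4 * x ^ 3 - (3 / 2 : ℂ) * (1 - s) * (2 * x * b ^ 2 + 2 * x * c ^ 2)) x := by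
  have h4 : HasDerivAt (fun x : ℂ => x ^ 4) ((4 : ℕ) * x ^ 3) x := hasDerivAt_pow 4 x
  have h2 : HasDerivAt (fun x : ℂ => x ^ 2) ((2 : ℕ) * x ^ 1) x := hasDerivAt_pow 2 x
  have H := (h4.add_const (b ^ 4 + c ^ 4)).sub
    ((((h2.mul_const (b ^ 2)).add (h2.mul_const (c ^ 2))).add_const
      (b ^ 2 * c ^ 2)).const_mul ((3 / 2 : ℂ) * (1 - s)))
  have hf : (fun x => q x b c)
      = fun x : ℂ => (x ^ 4 + (b ^ 4 + c ^ 4))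
        - (3 / 2 : ℂ) * (1 - s) * ((x ^ 2 * b ^ 2 + x ^ 2 * c ^ 2) + b ^ 2 * c ^ 2) := by
    funext y; simp only [q]; ring
  rw [hf]
  refine H.congr_deriv ?_
  push_cast
  ring

/-- From the three critical equations, the first coordinate vanishes. -/
lemma key (a b c : ℂ)
    (Ea : a = 0 ∨ 2 * a ^ 2 = (3 / 2 : ℂ) * (1 - s) * (b ^ 2 + c ^ 2))
    (Eb : b = 0 ∨ 2 * b ^ 2 = (3 / 2 : ℂ) * (1 - s) * (a ^ 2 + c ^ 2))
    (Ec : c = 0 ∨ 2 * c ^ 2 = (3 / 2 : ℂ) * (1 - s) * (a ^ 2 + b ^ 2)) :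
    a = 0 := by
  have hs := s_sq
  -- nonvanishing constants
  have h2t : (7 : ℂ) - 3 * s ≠ 0 := by
    intro h
    have hv : s = 7 / 3 := by linear_combination (-1 / 3 : ℂ) * h
    rw [hv] at hs; norm_num at hs
  have h4t : (35 : ℂ) + 9 * s ≠ 0 := by
    intro h
    have hv : s = -35 / 9 := by linear_combination (1 / 9 : ℂ) * h
    rw [hv] at hs; norm_num at hs
  have hqt : (14 : ℂ) + 6 * s ≠ 0 := by
    intro h
    have hv : s = -7 / 3 := by linear_combination (1 / 6 : ℂ) * h
    rw [hv] at hs; norm_num at hs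
  rcases Ea with ha | Ea
  · exact ha
  rcases Eb with hb | Eb
  · rcases Ec with hc | Ec
    · -- b = c = 0 : 2a² = 0
      have : a ^ 2 = 0 := by
        rw [hb, hc] at Ea; linear_combination (1 / 2 : ℂ) * Ea
      exact pow_eq_zero_iff (by norm_num) |>.mp this
    · -- b = 0, 2c² = t(a²), 2a² = t c² ⇒ (35+9s) a² = 0 (using s²=-7)
      rw [hb] at Ea Ec
      have h0 : ((35 : ℂ) + 9 * s) * a ^ 2 = 0 := by
        linear_combination 4 * Ea + 3 * (1 - s) * Ec + (9 / 2 : ℂ) * a ^ 2 * hs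
      have : a ^ 2 = 0 := (mul_eq_zero.mp h0).resolve_left h4t
      exact pow_eq_zero_iff (by norm_num) |>.mp this
  rcases Ec with hc | Ec
  · -- c = 0, symmetric to previous
    rw [hc] at Ea Eb
    have h0 : ((35 : ℂ) + 9 * s) * a ^ 2 = 0 := by
      linear_combination 4 * Ea + 3 * (1 - s) * Eb + (9 / 2 : ℂ) * a ^ 2 * hs
    have : a ^ 2 = 0 := (mul_eq_zero.mp h0).resolve_left h4t
    exact pow_eq_zero_iff (by norm_num) |>.mp this
  · -- all three equations hold
    have hbc : b ^ 2 = c ^ 2 := by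
      have h0 : ((7 : ℂ) - 3 * s) * (b ^ 2 - c ^ 2) = 0 := by
        linear_combination 2 * Eb - 2 * Ec
      have := (mul_eq_zero.mp h0).resolve_left h2t
      linear_combination this
    -- Eb with c² = b²: 2b² = t a² + t b²; Ea: 2a² = 2 t b² ⇒ (14+6s) b² = 0
    have h0 : ((14 : ℂ) + 6 * s) * b ^ 2 = 0 := by
      linear_combination (3 / 4 : ℂ) * (1 - s) * Ea + Eb
        + (-21 / 8 + 15 / 4 * s - 9 / 8 * s ^ 2) * hbc + (9 / 4 : ℂ) * b ^ 2 * hs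
    have hb2 : b ^ 2 = 0 := (mul_eq_zero.mp h0).resolve_left hqt
    have hc2 : c ^ 2 = 0 := hbc ▸ hb2
    have : a ^ 2 = 0 := by
      rw [hb2, hc2] at Ea
      linear_combination (1 / 2 : ℂ) * Ea
    exact pow_eq_zero_iff (by norm_num) |>.mp this

/-- The plane quartic curve `q = 0` is smooth: the three partial derivatives of `q`
vanish simultaneously only at the origin of `ℂ³`. -/
theorem stmt_8 (a b c : ℂ)
    (hx : deriv (fun x => q x b c) a = 0)
    (hy : deriv (fun y => q a y c) b = 0)
    (hz : deriv (fun z => q a b z) c = 0) :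
    a = 0 ∧ b = 0 ∧ c = 0 := by
  have hsymy : (fun y => q a y c) = fun y => q y a c := by
    funext y; simp only [q]; ring
  have hsymz : (fun z => q a b z) = fun z => q z a b := by
    funext z; simp only [q]; ring
  rw [hsymy] at hy
  rw [hsymz] at hz
  rw [(hasDerivAt_q b c a).deriv] at hx
  rw [(hasDerivAt_q a c b).deriv] at hy
  rw [(hasDerivAt_q a b c).deriv] at hz
  have Ea : a = 0 ∨ 2 * a ^ 2 = (3 / 2 : ℂ) * (1 - s) * (b ^ 2 + c ^ 2) := by
    have h0 : a * (2 * a ^ 2 - (3 / 2 : ℂ) * (1 - s) * (b ^ 2 + c ^ 2)) = 0 := by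
      linear_combination (1 / 2 : ℂ) * hx
    rcases mul_eq_zero.mp h0 with h | h
    · exact Or.inl h
    · exact Or.inr (by linear_combination h)
  have Eb : b = 0 ∨ 2 * b ^ 2 = (3 / 2 : ℂ) * (1 - s) * (a ^ 2 + c ^ 2) := by
    have h0 : b * (2 * b ^ 2 - (3 / 2 : ℂ) * (1 - s) * (a ^ 2 + c ^ 2)) = 0 := by
      linear_combination (1 / 2 : ℂ) * hy
    rcases mul_eq_zero.mp h0 with h | h
    · exact Or.inl h
    · exact Or.inr (by linear_combination h)
  have Ec : c = 0 ∨ 2 * c ^ 2 = (3 / 2 : ℂ) * (1 - s) * (a ^ 2 + b ^ 2) := by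
    have h0 : c * (2 * c ^ 2 - (3 / 2 : ℂ) * (1 - s) * (a ^ 2 + b ^ 2)) = 0 := by
      linear_combination (1 / 2 : ℂ) * hz
    rcases mul_eq_zero.mp h0 with h | h
    · exact Or.inl h
    · exact Or.inr (by linear_combination h)
  refine ⟨key a b c Ea Eb Ec, key b a c ?_ ?_ ?_, key c a b ?_ ?_ ?_⟩
  · rcases Eb with h | h
    · exact Or.inl h
    · exact Or.inr (by linear_combination h)
  · rcases Ea with h | h
    · exact Or.inl h
    · exact Or.inr (by linear_combination h)
  · rcases Ec with h | h
    · exact Or.inl h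
    · exact Or.inr (by linear_combination h)
  · rcases Ec with h | h
    · exact Or.inl h
    · exact Or.inr (by linear_combination h)
  · rcases Ea with h | h
    · exact Or.inl h
    · exact Or.inr (by linear_combination h)
  · rcases Eb with h | h
    · exact Or.inl h
    · exact Or.inr (by linear_combination h)
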